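/- Let {P_m : m ∈ ℕ} be a partition of ℕ into infinite sets, and let I := {A ⊆ ℕ : {m : A ∩ P_m infinite} is finite} (the Fin × Fin ideal). For any real sequence x, the set of I-limit points of x equals ⋂_k ⋃_{m≥k} L_{x↾P_m}, where L_{x↾P_m} denotes the set of ordinary limit points of the subsequence (x_n : n ∈ P_m). In particular, the set of I-limit points is an F_{σδ}-set. -/

import Mathlib

open Filter Topology Set
open scoped ENNReal

/-- An ideal on ℕ: contains all finite sets, closed under subsets and finite
unions, and proper. -/
def IsIdeal (I : Set (Set ℕ)) : Prop :=
  (∀ A : Set ℕ, A.Finite → A ∈ I) ∧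
  (∀ A B : Set ℕ, A ⊆ B → B ∈ I → A ∈ I) ∧
  (∀ A B : Set ℕ, A ∈ I → B ∈ I → A ∪ B ∈ I) ∧
  (Set.univ : Set ℕ) ∉ I

/-- `ℓ` is an `I`-limit point of `x`: some subsequence indexed by a set not in
`I` converges to `ℓ`. -/
def ILimitPoint {X : Type*} [TopologicalSpace X] (I : Set (Set ℕ)) (x : ℕ → X) (ℓ : X) : Prop :=
  ∃ A : Set ℕ, A ∉ I ∧ Tendsto x (atTop ⊓ 𝓟 A) (𝓝 ℓ)

/-- `ℓ` is an `I`-cluster point of `x`. -/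
def IClusterPoint {X : Type*} [TopologicalSpace X] (I : Set (Set ℕ)) (x : ℕ → X) (ℓ : X) : Prop :=
  ∀ U ∈ 𝓝 ℓ, {n | x n ∈ U} ∉ I

/-- A lower semicontinuous submeasure on ℕ. -/
def IsLSCSubmeasure (φ : Set ℕ → ℝ≥0∞) : Prop :=
  φ ∅ = 0 ∧ (∀ A B : Set ℕ, A ⊆ B → φ A ≤ φ B) ∧
  (∀ A B : Set ℕ, φ (A ∪ B) ≤ φ A + φ B) ∧
  (∀ A : Set ℕ, Tendsto (fun n => φ (A ∩ Set.Iio n)) atTop (𝓝 (φ A)))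

/-- `‖A‖_φ = lim_n φ(A \ {0,…,n-1})`, the limit of an antitone sequence,
realized as an infimum. -/
noncomputable def phiNorm (φ : Set ℕ → ℝ≥0∞) (A : Set ℕ) : ℝ≥0∞ :=
  ⨅ n : ℕ, φ (A \ Set.Iio n)

/-- The ideal of sets of asymptotic density zero. -/
def I0 : Set (Set ℕ) :=
  {S : Set ℕ | Tendsto (fun n => (Nat.card ↥(S ∩ Set.Iio n) : ℝ) / n) atTop (𝓝 0)}

/-- `u(ℓ) := lim_k ‖{n : x n ∈ U_k}‖_φ` along a decreasing local base at `ℓ`;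
its value is independent of the base and equals the infimum over all
neighborhoods. -/
noncomputable def uFun {X : Type*} [TopologicalSpace X] (φ : Set ℕ → ℝ≥0∞)
    (x : ℕ → X) (ℓ : X) : ℝ≥0∞ :=
  ⨅ U ∈ 𝓝 ℓ, phiNorm φ {n | x n ∈ U}

/-- Isolated points of a set. -/
def isolatedPts {X : Type*} [TopologicalSpace X] (B : Set X) : Set X :=
  {b ∈ B | ∃ U ∈ 𝓝 b, U ∩ B = {b}}


lemma infinite_of_unbounded' {S : Set ℕ} (h : ∀ N, ∃ q ∈ S, N ≤ q) : S.Infinite := by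
  intro hfin
  obtain ⟨B, hB⟩ := hfin.bddAbove
  obtain ⟨q, hq, hBq⟩ := h (B + 1)
  exact absurd (hB hq) (by omega)

lemma freq_inf_principal' {p : ℕ → Prop} {s : Set ℕ} (h : ∃ᶠ q in atTop ⊓ 𝓟 s, p q) :
    ∀ N, ∃ q, N ≤ q ∧ q ∈ s ∧ p q := by
  rw [Filter.Frequently, eventually_inf_principal] at h
  simpa using h

lemma stmt19_main (P : ℕ → Set ℕ) (x : ℕ → ℝ) :
    {ℓ : ℝ | ILimitPoint {A : Set ℕ | {m | (A ∩ P m).Infinite}.Finite} x ℓ}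
        = ⋂ k : ℕ, ⋃ m : ℕ, ⋃ (_ : k ≤ m), {ℓ : ℝ | MapClusterPt ℓ (atTop ⊓ 𝓟 (P m)) x} := by
  ext ℓ
  simp only [mem_setOf_eq, mem_iInter, mem_iUnion]
  constructor
  · rintro ⟨A, hA, hT⟩ k
    have hAinf : {m' | (A ∩ P m').Infinite}.Infinite := hA
    obtain ⟨m', hm', hkm⟩ := hAinf.exists_gt k
    refine ⟨m', hkm.le, ?_⟩
    have hne : (atTop ⊓ 𝓟 (A ∩ P m')).NeBot := by
      rw [inf_principal_neBot_iff]
      intro U hU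
      obtain ⟨N, hN⟩ := mem_atTop_sets.mp hU
      obtain ⟨b, hb, hNb⟩ := hm'.exists_gt N
      exact ⟨b, hN b hNb.le, hb⟩
    have hT' : Tendsto x (atTop ⊓ 𝓟 (A ∩ P m')) (𝓝 ℓ) :=
      hT.mono_left (inf_le_inf_left _ (principal_mono.mpr inter_subset_left))
    exact hT'.mapClusterPt.mono (inf_le_inf_left _ (principal_mono.mpr inter_subset_right))
  · intro h
    choose m hm hcl using h
    have key : ∀ j i : ℕ, ∃ q, i ≤ q ∧ q ∈ P (m j) ∧ |x q - ℓ| < 1 / (i + 1 : ℝ) := by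
      intro j i
      have hb : Metric.ball ℓ (1 / (i + 1 : ℝ)) ∈ 𝓝 ℓ :=
        Metric.ball_mem_nhds _ (by positivity)
      obtain ⟨q, hq1, hq2, hq3⟩ :=
        freq_inf_principal' (mapClusterPt_iff_frequently.mp (hcl j) _ hb) i
      exact ⟨q, hq1, hq2, by simpa [Real.dist_eq] using hq3⟩
    choose n hn1 hn2 hn3 using key
    refine ⟨{q | ∃ j i, j ≤ i ∧ q = n j i}, ?_, ?_⟩
    · intro hfin
      have hbig : {m' | ({q | ∃ j i, j ≤ i ∧ q = n j i} ∩ P m').Infinite}.Infinite := by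
        apply infinite_of_unbounded'
        intro N
        refine ⟨m N, ?_, hm N⟩
        apply infinite_of_unbounded'
        intro N'
        exact ⟨n N (max N N'),
          ⟨⟨N, max N N', le_max_left _ _, rfl⟩, hn2 N (max N N')⟩,
          le_trans (le_max_right _ _) (hn1 _ _)⟩
      exact hbig hfin
    · rw [Metric.tendsto_nhds]
      intro ε hε
      rw [eventually_inf_principal]
      obtain ⟨I, hI⟩ := exists_nat_one_div_lt hε
      rw [eventually_atTop]
      refine ⟨((Finset.range I ×ˢ Finset.range I).sup fun p => n p.1 p.2) + 1,
        fun q hq hqA => ?_⟩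
      obtain ⟨j, i, hji, rfl⟩ := hqA
      by_cases hiI : i < I
      · exfalso
        have hmem : (j, i) ∈ Finset.range I ×ˢ Finset.range I := by
          simp only [Finset.mem_product, Finset.mem_range]
          omega
        have hle := Finset.le_sup (f := fun p : ℕ × ℕ => n p.1 p.2) hmem
        simp only at hle
        omega
      · have hIi : (I : ℝ) ≤ i := Nat.cast_le.mpr (not_lt.mp hiI)
        have h1 : (1 : ℝ) / (i + 1) ≤ 1 / (I + 1) := by
          apply one_div_le_one_div_of_le (by positivity)
          linarith
        calc dist (x (n j i)) ℓ = |x (n j i) - ℓ| := Real.dist_eq _ _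
          _ < 1 / (i + 1) := hn3 j i
          _ ≤ 1 / (I + 1) := h1
          _ < ε := hI


/-- for the `Fin × Fin` ideal built from a partition of ℕ into
infinite pieces, the `I`-limit points of a real sequence are
`⋂_k ⋃_{m ≥ k} L_{x↾P m}`; in particular they form an `F_{σδ}`-set. -/
theorem stmt19 (P : ℕ → Set ℕ) (hdisj : Pairwise (Function.onFun Disjoint P))
    (hcover : (⋃ m, P m) = Set.univ) (hinf : ∀ m, (P m).Infinite) (x : ℕ → ℝ) :
    ({ℓ : ℝ | ILimitPoint {A : Set ℕ | {m | (A ∩ P m).Infinite}.Finite} x ℓ}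
        = ⋂ k : ℕ, ⋃ m : ℕ, ⋃ (_ : k ≤ m), {ℓ : ℝ | MapClusterPt ℓ (atTop ⊓ 𝓟 (P m)) x}) ∧
      ∃ G : ℕ → Set ℝ,
        (∀ k, ∃ F : ℕ → Set ℝ, (∀ n, IsClosed (F n)) ∧ G k = ⋃ n, F n) ∧
        {ℓ : ℝ | ILimitPoint {A : Set ℕ | {m | (A ∩ P m).Infinite}.Finite} x ℓ}
          = ⋂ k, G k := by
  have main := stmt19_main P x
  refine ⟨main, fun k => ⋃ m, ⋃ (_ : k ≤ m), {ℓ : ℝ | MapClusterPt ℓ (atTop ⊓ 𝓟 (P m)) x},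
    fun k => ?_, main⟩
  have hLclosed : ∀ m : ℕ, IsClosed {ℓ : ℝ | MapClusterPt ℓ (atTop ⊓ 𝓟 (P m)) x} := fun m =>
    isClosed_setOf_clusterPt (f := map x (atTop ⊓ 𝓟 (P m)))
  refine ⟨fun m => if k ≤ m then {ℓ : ℝ | MapClusterPt ℓ (atTop ⊓ 𝓟 (P m)) x} else ∅, ?_, ?_⟩
  · intro m
    by_cases hkm : k ≤ m
    · simpa [if_pos hkm] using hLclosed m
    · simp [if_neg hkm]
  · ext ℓ
    simp only [mem_iUnion, mem_setOf_eq]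
    constructor
    · rintro ⟨m, hkm, hℓ⟩
      exact ⟨m, by simp only [if_pos hkm]; exact hℓ⟩
    · rintro ⟨m, hℓ⟩
      by_cases hkm : k ≤ m
      · exact ⟨m, hkm, by simpa [if_pos hkm] using hℓ⟩
      · simp [if_neg hkm] at hℓ
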